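/- arXiv:1205.0456 — 2 statements merged into one kernel-verified Lean document; each statement's English description precedes it below -/
import Mathlib

section
/- For two monomials x^α, x^β of the same degree r in K[x_0,...,x_n], x^α is greater than or equal to x^β in the Borel partial order if and only if for every i = 0,...,n the partial sum Σ_{j=i}^n (α_j - β_j) is nonnegative. -/
open MvPolynomial Filter

noncomputable section

/-- The Hilbert function of `K[x_0,...,x_{m-1}]/I` in degree `t`. -/
def hilb {K : Type*} [Field K] (m : ℕ) (I : Ideal (MvPolynomial (Fin m) K)) (t : ℕ) : ℤ :=
  (Module.finrank K (MvPolynomial.homogeneousSubmodule (Fin m) K t) : ℤ) -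
  (Module.finrank K
    (Submodule.restrictScalars K
        (I : Submodule (MvPolynomial (Fin m) K) (MvPolynomial (Fin m) K)) ⊓
      MvPolynomial.homogeneousSubmodule (Fin m) K t :
        Submodule K (MvPolynomial (Fin m) K)) : ℤ)

/-- Saturation of `I` w.r.t. the irrelevant ideal: `I^sat = ⋃_k (I : (x_0,...,x_{m-1})^k)`. -/
def sat {K : Type*} [Field K] (m : ℕ) (I : Ideal (MvPolynomial (Fin m) K)) :
    Ideal (MvPolynomial (Fin m) K) :=
  ⨆ k : ℕ, Submodule.colon
    (I : Submodule (MvPolynomial (Fin m) K) (MvPolynomial (Fin m) K))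
    (((Ideal.span (Set.range X)) ^ k : Ideal (MvPolynomial (Fin m) K)) :
      Submodule (MvPolynomial (Fin m) K) (MvPolynomial (Fin m) K))

/-- The combinatorial Borel condition: `x^α ∈ I`, `x_i ∣ x^α`, `j > i` implies
`(x_j/x_i)·x^α ∈ I` (variables ordered `x_{m-1} > ... > x_0`). -/
def borelCond {K : Type*} [Field K] (m : ℕ) (I : Ideal (MvPolynomial (Fin m) K)) : Prop :=
  ∀ α : Fin m →₀ ℕ, monomial α (1:K) ∈ I → ∀ i j : Fin m, i < j → α i ≠ 0 →
    monomial (α - Finsupp.single i 1 + Finsupp.single j 1) (1:K) ∈ I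

/-- `I` is a monomial ideal. -/
def isMonomialIdeal {K : Type*} [Field K] (m : ℕ) (I : Ideal (MvPolynomial (Fin m) K)) : Prop :=
  ∃ S : Set (Fin m →₀ ℕ), I = Ideal.span ((fun α => monomial α (1:K)) '' S)

/-- Increasing elementary Borel move on exponent vectors: `β = (x_{i+1}/x_i)·α`. -/
def stepUp (n : ℕ) (α β : Fin (n+1) →₀ ℕ) : Prop :=
  ∃ i : Fin n, α i.castSucc ≠ 0 ∧
    β = α - Finsupp.single i.castSucc 1 + Finsupp.single i.succ 1

/-- Borel partial order: `borelGE n α β` means `α ≥_B β`. -/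
def borelGE (n : ℕ) (α β : Fin (n+1) →₀ ℕ) : Prop :=
  Relation.ReflTransGen (stepUp n) β α

/-- Rational binomial coefficient `C(x, k) = x(x-1)...(x-k+1)/k!`. -/
def qchoose (x : ℚ) (k : ℕ) : ℚ := (∏ i ∈ Finset.range k, (x - i)) / (Nat.factorial k)

/-- `Σ_{i=0}^{r-1} C(t + a_i - i, a_i)` for a list `l = [a_0, ..., a_{r-1}]`. -/
def gsum (l : List ℕ) (t : ℚ) : ℚ :=
  (l.zipIdx.map (fun q => qchoose (t + (q.1 : ℚ) - (q.2 : ℚ)) q.1)).sum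

/-- First difference operator on polynomials: `Δq(t) = q(t) - q(t-1)`. -/
def dlt (q : Polynomial ℚ) : Polynomial ℚ := q - q.comp (Polynomial.X - 1)

/-! ### Auxiliary machinery for statement 5 -/

/-- Tail sum `T γ k = Σ_{j ≥ k} γ j`. -/
private def T {n : ℕ} (γ : Fin (n+1) →₀ ℕ) (k : Fin (n+1)) : ℕ := ∑ j ∈ Finset.Ici k, γ j

section Aux
variable {n : ℕ}

private lemma Ici_last : Finset.Ici (Fin.last n) = {Fin.last n} := by
  ext j; simp [Finset.mem_Ici, Fin.last_le_iff, eq_comm]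

private lemma T_last (γ : Fin (n+1) →₀ ℕ) : T γ (Fin.last n) = γ (Fin.last n) := by
  simp [T, Ici_last]

private lemma T_castSucc (γ : Fin (n+1) →₀ ℕ) (i : Fin n) :
    T γ i.castSucc = γ i.castSucc + T γ i.succ := by
  have h1 : Finset.Ioi i.castSucc = Finset.Ici i.succ := by
    ext j; simp [Fin.lt_iff_val_lt_val, Fin.le_iff_val_le_val]
  have h2 : Finset.Ici i.castSucc = insert i.castSucc (Finset.Ici i.succ) := by
    rw [← h1, Finset.Ioi_insert]
  rw [T, h2, Finset.sum_insert (by simp [h1.symm])]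
  rfl

private lemma T_zero (γ : Fin (n+1) →₀ ℕ) : T γ 0 = ∑ j, γ j := by
  have : Finset.Ici (0 : Fin (n+1)) = Finset.univ := by
    ext j; simp [Fin.zero_le]
  simp [T, this]

private lemma T_step' (β : Fin (n+1) →₀ ℕ) (i : Fin n) (hne : β i.castSucc ≠ 0)
    (k : Fin (n+1)) :
    T (β - Finsupp.single i.castSucc 1 + Finsupp.single i.succ 1) k
      + (if i.castSucc ∈ Finset.Ici k then 1 else 0)
      = T β k + (if i.succ ∈ Finset.Ici k then 1 else 0) := by
  have hab : i.castSucc ≠ i.succ := (Fin.castSucc_lt_succ : i.castSucc < i.succ).ne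
  set β' : Fin (n+1) →₀ ℕ := β - Finsupp.single i.castSucc 1 + Finsupp.single i.succ 1 with hβ'
  have key : ∀ j : Fin (n+1), β' j
      + (if j = i.castSucc then 1 else 0) = β j + (if j = i.succ then 1 else 0) := by
    intro j
    simp only [hβ', Finsupp.add_apply, Finsupp.tsub_apply, Finsupp.single_apply]
    rcases eq_or_ne j i.castSucc with rfl | h1
    · simp [Ne.symm hab, hab]; omega
    · rcases eq_or_ne j i.succ with rfl | h2
      · simp [Ne.symm h1]; exact h1
      · simp [h1, h2, Ne.symm h1, Ne.symm h2]
  have := Finset.sum_congr rfl (fun j (_ : j ∈ Finset.Ici k) => key j)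
  rw [Finset.sum_add_distrib, Finset.sum_add_distrib] at this
  simpa [T, Finset.sum_ite_eq' (Finset.Ici k)] using this

private lemma T_step_eq (β : Fin (n+1) →₀ ℕ) (i : Fin n) (hne : β i.castSucc ≠ 0)
    (k : Fin (n+1)) :
    T (β - Finsupp.single i.castSucc 1 + Finsupp.single i.succ 1) k
      = T β k + (if k = i.succ then 1 else 0) := by
  have h := T_step' β i hne k
  have himp : i.castSucc ∈ Finset.Ici k → i.succ ∈ Finset.Ici k := by
    simp only [Finset.mem_Ici, Fin.le_iff_val_le_val, Fin.val_succ, Fin.coe_castSucc]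
    omega
  have hiff : (i.succ ∈ Finset.Ici k ∧ i.castSucc ∉ Finset.Ici k) ↔ k = i.succ := by
    simp only [Finset.mem_Ici, Fin.le_iff_val_le_val, Fin.val_succ, Fin.coe_castSucc, not_le,
      Fin.ext_iff]
    omega
  by_cases h1 : i.castSucc ∈ Finset.Ici k
  · have h2 := himp h1
    have h3 : ¬ k = i.succ := fun hk => (hiff.2 hk).2 h1
    simp [h1, h2, h3] at h ⊢; omega
  · by_cases h2 : i.succ ∈ Finset.Ici k
    · have h3 : k = i.succ := hiff.1 ⟨h2, h1⟩
      simp [h1, h2, h3] at h ⊢; omega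
    · have h3 : ¬ k = i.succ := fun hk => h2 (by rw [hk]; simp)
      simp [h1, h2, h3] at h ⊢; omega

private lemma T_mono_of_rtg {β γ : Fin (n+1) →₀ ℕ}
    (h : Relation.ReflTransGen (stepUp n) β γ) (k : Fin (n+1)) : T β k ≤ T γ k := by
  induction h with
  | refl => exact le_refl _
  | tail h1 h2 ih =>
      obtain ⟨i, hne, rfl⟩ := h2
      calc T β k ≤ _ := ih
        _ ≤ _ := by rw [T_step_eq _ i hne k]; omega

/-- If all tail sums agree, the finsupps agree. -/
private lemma eq_of_T_eq {α β : Fin (n+1) →₀ ℕ} (h : ∀ k, T α k = T β k) : α = β := by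
  ext j
  induction j using Fin.lastCases with
  | last => rw [← T_last, ← T_last, h]
  | cast i =>
      have h1 := T_castSucc α i
      have h2 := T_castSucc β i
      have h3 := h i.castSucc
      have h4 := h i.succ
      omega

private lemma key_ind (α : Fin (n+1) →₀ ℕ) :
    ∀ d : ℕ, ∀ β : Fin (n+1) →₀ ℕ, (∀ k, T β k ≤ T α k) → T β 0 = T α 0 →
      (∑ k, T α k) = (∑ k, T β k) + d → Relation.ReflTransGen (stepUp n) β α := by
  intro d
  induction d with
  | zero =>
      intro β hle h0 hsum
      have heq : ∀ k, T α k = T β k := by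
        by_contra hc
        push_neg at hc
        obtain ⟨k, hk⟩ := hc
        have hk' : T β k < T α k := lt_of_le_of_ne (hle k) (fun e => hk e.symm)
        have : (∑ k, T β k) < ∑ k, T α k :=
          Finset.sum_lt_sum (fun i _ => hle i) ⟨k, Finset.mem_univ k, hk'⟩
        omega
      rw [eq_of_T_eq heq]
  | succ d ih =>
      intro β hle h0 hsum
      -- there is some index with a strict inequality; take the minimal one
      have hne : (Finset.univ.filter (fun m => T β m < T α m)).Nonempty := by
        by_contra hc
        rw [Finset.not_nonempty_iff_eq_empty, Finset.filter_eq_empty_iff] at hc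
        have : ∀ k : Fin (n+1), T α k = T β k := fun k =>
          le_antisymm (not_lt.1 (hc (Finset.mem_univ k))) (hle k)
        have : (∑ k, T α k) = ∑ k, T β k := Finset.sum_congr rfl (fun k _ => this k)
        omega
      set m := (Finset.univ.filter (fun m => T β m < T α m)).min' hne with hm
      have hmem : T β m < T α m := by
        have := (Finset.univ.filter (fun m => T β m < T α m)).min'_mem hne
        simpa using this
      have hmin : ∀ k < m, T β k = T α k := by
        intro k hk
        by_contra hc
        have hk' : T β k < T α k := lt_of_le_of_ne (hle k) hc
        have : m ≤ k := Finset.min'_le _ _ (by simpa using hk')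
        exact absurd hk (not_lt.2 this)
      have hm0 : m ≠ 0 := by
        intro hc
        rw [hc] at hmem
        omega
      obtain ⟨i, hi⟩ : ∃ i : Fin n, m = i.succ := by
        refine ⟨⟨(m : ℕ) - 1, ?_⟩, ?_⟩
        · have := m.isLt
          have : (m : ℕ) ≠ 0 := fun hc => hm0 (Fin.ext hc)
          omega
        · have : (m : ℕ) ≠ 0 := fun hc => hm0 (Fin.ext hc)
          apply Fin.ext
          simp [Fin.val_succ]
          omega
      have hcs : T β i.castSucc = T α i.castSucc :=
        hmin i.castSucc (by rw [hi]; exact Fin.castSucc_lt_succ)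
      have hsucc : T β i.succ < T α i.succ := by rwa [hi] at hmem
      have hβne : β i.castSucc ≠ 0 := by
        have h1 := T_castSucc α i
        have h2 := T_castSucc β i
        omega
      set β' : Fin (n+1) →₀ ℕ := β - Finsupp.single i.castSucc 1 + Finsupp.single i.succ 1
        with hβ'
      have hstep : stepUp n β β' := ⟨i, hβne, rfl⟩
      have hT' : ∀ k, T β' k = T β k + (if k = i.succ then 1 else 0) :=
        fun k => T_step_eq β i hβne k
      have hle' : ∀ k, T β' k ≤ T α k := by
        intro k
        rw [hT' k]
        by_cases hk : k = i.succ
        · subst hk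
          rw [if_pos rfl]
          omega
        · simp only [if_neg hk, add_zero]
          exact hle k
      have h0' : T β' 0 = T α 0 := by
        rw [hT' 0]
        have : (0 : Fin (n+1)) ≠ i.succ := by
          intro hc
          exact hm0 (by rw [hi, ← hc])
        simp [this, h0]
      have hsum' : (∑ k, T α k) = (∑ k, T β' k) + d := by
        have : (∑ k, T β' k) = (∑ k, T β k) + 1 := by
          have : (∑ k, T β' k) = ∑ k, (T β k + if k = i.succ then 1 else 0) :=
            Finset.sum_congr rfl (fun k _ => hT' k)
          rw [this, Finset.sum_add_distrib, Finset.sum_ite_eq' Finset.univ i.succ (fun _ => 1)]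
          simp
        omega
      exact Relation.ReflTransGen.head hstep (ih β' hle' h0' hsum')

end Aux

/-- for monomials `x^α, x^β` of the same degree `r`,
`x^α ≥_B x^β` iff all partial sums `Σ_{j=i}^n (α_j - β_j)` are nonnegative. -/
theorem statement5 (n r : ℕ) (α β : Fin (n+1) →₀ ℕ)
    (hα : (∑ j, α j) = r) (hβ : (∑ j, β j) = r) :
    borelGE n α β ↔
      ∀ i : Fin (n+1), 0 ≤ ∑ j ∈ Finset.Ici i, ((α j : ℤ) - (β j : ℤ)) := by
  have hTsum : ∀ i : Fin (n+1),
      (∑ j ∈ Finset.Ici i, ((α j : ℤ) - (β j : ℤ))) = (T α i : ℤ) - (T β i : ℤ) := by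
    intro i
    rw [Finset.sum_sub_distrib]
    simp [T]
  constructor
  · intro h i
    rw [hTsum i]
    have := T_mono_of_rtg h i
    omega
  · intro h
    have hle : ∀ k, T β k ≤ T α k := by
      intro k
      have := h k
      rw [hTsum k] at this
      omega
    have h0 : T β 0 = T α 0 := by
      rw [T_zero, T_zero, hα, hβ]
    have hsumle : (∑ k, T β k) ≤ ∑ k, T α k :=
      Finset.sum_le_sum (fun k _ => hle k)
    exact key_ind α ((∑ k, T α k) - (∑ k, T β k)) β hle h0 (by omega)

end
end

section
/- Let B be a Borel set of degree-r monomials, x^β a Borel-minimal monomial of B divisible by x_0, and I the ideal generated by B \ {x^β}. Then the set of degree-(r+1) monomials in the ideal generated by B but not in I is exactly {x_0 · x^β}; equivalently, dim_K ⟨B⟩_{r+1} - dim_K I_{r+1} = 1. -/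
open MvPolynomial Filter

noncomputable section

namespace S13

lemma sumUniv_eq_degree {m : ℕ} (d : Fin m →₀ ℕ) : (∑ j, d j) = d.degree :=
  (Finset.sum_subset (Finset.subset_univ _)
    (fun x _ hx => Finsupp.notMem_support_iff.mp hx)).symm

lemma mem_homog_iff {K : Type*} [Field K] {m k : ℕ} (p : MvPolynomial (Fin m) K) :
    p ∈ homogeneousSubmodule (Fin m) K k ↔ ∀ d ∈ p.support, (∑ j, d j) = k := by
  rw [mem_homogeneousSubmodule]
  constructor
  · intro h d hd
    rw [sumUniv_eq_degree, Finsupp.degree_eq_weight_one]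
    exact h (MvPolynomial.mem_support_iff.mp hd)
  · intro h d hd
    show (Finsupp.weight (fun _ => 1)) d = k
    rw [← Finsupp.degree_eq_weight_one, ← sumUniv_eq_degree]
    exact h d (MvPolynomial.mem_support_iff.mpr hd)

lemma monomial_mem_iff {K : Type*} [Field K] {m : ℕ} (γ : Fin m →₀ ℕ) (S : Set (Fin m →₀ ℕ)) :
    monomial γ (1:K) ∈ Ideal.span ((fun α => monomial α (1:K)) '' S) ↔ ∃ α ∈ S, α ≤ γ := by
  rw [mem_ideal_span_monomial_image]
  classical
  simp [support_monomial]

lemma sum_single {m : ℕ} (i : Fin (m+1)) : (∑ j, Finsupp.single i (1:ℕ) j) = 1 := by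
  simp [Finsupp.single_apply]

lemma homog_fd (K : Type*) [Field K] (m k : ℕ) :
    FiniteDimensional K (homogeneousSubmodule (Fin m) K k) := by
  classical
  set c : Fin m →₀ ℕ := Finsupp.equivFunOnFinite.symm (fun _ => k) with hc
  have hfin : ({d : Fin m →₀ ℕ | d ≤ c}).Finite := Set.finite_Iic c
  have hle : homogeneousSubmodule (Fin m) K k ≤
      Submodule.span K ((fun d => (monomial d (1:K) : MvPolynomial (Fin m) K)) '' {d | d ≤ c}) := by
    intro p hp
    rw [mem_homog_iff] at hp
    rw [p.as_sum]
    apply Submodule.sum_mem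
    intro d hd
    have h1 : (monomial d (coeff d p) : MvPolynomial (Fin m) K)
        = (coeff d p) • monomial d (1:K) := by
      rw [smul_monomial, smul_eq_mul, mul_one]
    rw [h1]
    apply Submodule.smul_mem
    apply Submodule.subset_span
    refine ⟨d, ?_, rfl⟩
    intro j
    have : d j ≤ k := by
      rw [← hp d hd]
      exact Finset.single_le_sum (f := fun i => d i) (fun i _ => Nat.zero_le _) (Finset.mem_univ j)
    simpa [hc] using this
  have := FiniteDimensional.span_of_finite K (hfin.image (fun d => (monomial d (1:K) : MvPolynomial (Fin m) K)))
  exact Submodule.finiteDimensional_of_le hle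

lemma eq_single_of_sum_eq_one {m : ℕ} (δ : Fin m →₀ ℕ) (h : (∑ j, δ j) = 1) :
    ∃ j, δ = Finsupp.single j 1 := by
  obtain ⟨j, hj⟩ : ∃ j, δ j ≠ 0 := by
    by_contra hc; push_neg at hc; simp [hc] at h
  refine ⟨j, ?_⟩
  have hle : δ j ≤ 1 := h ▸ Finset.single_le_sum (f := fun i => δ i)
    (fun i _ => Nat.zero_le _) (Finset.mem_univ j)
  have h1 : δ j = 1 := le_antisymm hle (Nat.one_le_iff_ne_zero.mpr hj)
  have hz : ∑ i ∈ Finset.univ.erase j, δ i = 0 := by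
    have h2 : δ j + ∑ i ∈ Finset.univ.erase j, δ i = ∑ i, δ i :=
      Finset.add_sum_erase _ (fun i => δ i) (Finset.mem_univ j)
    omega
  ext i
  rcases eq_or_ne i j with rfl | hij
  · simp [h1]
  · have : δ i = 0 := Finset.sum_eq_zero_iff.mp hz i (Finset.mem_erase.mpr ⟨hij, Finset.mem_univ i⟩)
    simp [this, Finsupp.single_apply, Ne.symm hij]

lemma chain_move (n : ℕ) : ∀ d (α : Fin (n+1) →₀ ℕ) (i j : Fin (n+1)),
    j.val - i.val ≤ d → i < j → α i ≠ 0 →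
    Relation.ReflTransGen (stepUp n) α (α - Finsupp.single i 1 + Finsupp.single j 1) := by
  intro d
  induction d with
  | zero =>
    intro α i j hle hij _
    exact absurd hij (by rw [Fin.lt_def]; omega)
  | succ d ih =>
    intro α i j hle hij hi
    have hij' : i.val < j.val := hij
    have hin : i.val < n := by have := j.isLt; omega
    set k : Fin n := ⟨i.val, hin⟩ with hk
    have hcast : k.castSucc = i := by apply Fin.ext; simp [hk]
    set i' : Fin (n+1) := k.succ with hi'
    have hi'v : i'.val = i.val + 1 := rfl
    have hstep : stepUp n α (α - Finsupp.single i 1 + Finsupp.single i' 1) :=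
      ⟨k, by rw [hcast]; exact hi, by rw [hcast]⟩
    rcases eq_or_lt_of_le (show i'.val + 1 ≤ j.val + 1 by omega) with heq | hlt
    · have : i' = j := by apply Fin.ext; omega
      rw [← this]
      exact Relation.ReflTransGen.single hstep
    · have hi'j : i' < j := by rw [Fin.lt_def]; omega
      have hne : i ≠ i' := by intro h; apply_fun Fin.val at h; omega
      set α' : Fin (n+1) →₀ ℕ := α - Finsupp.single i 1 + Finsupp.single i' 1 with hα'
      have hα'i' : α' i' ≠ 0 := by
        simp [hα', Finsupp.add_apply, Finsupp.tsub_apply, Finsupp.single_apply, Ne.symm hne]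
      have htail := ih α' i' j (by omega) hi'j hα'i'
      have heq2 : α' - Finsupp.single i' 1 + Finsupp.single j 1
          = α - Finsupp.single i 1 + Finsupp.single j 1 := by
        rw [hα', add_tsub_cancel_right]
      rw [heq2] at htail
      exact Relation.ReflTransGen.head hstep htail

end S13

/-- for a Borel set `B`, a Borel-minimal `x^β ∈ B` divisible by `x_0`,
and `I = ⟨B \ {x^β}⟩`, the degree-`(r+1)` monomials in `⟨B⟩` but not in `I` are
exactly `{x_0·x^β}`; equivalently `dim_K ⟨B⟩_{r+1} - dim_K I_{r+1} = 1`. -/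
theorem statement13 {K : Type*} [Field K] [CharZero K] (n r : ℕ)
    (B : Finset (Fin (n+1) →₀ ℕ))
    (hdeg : ∀ α ∈ B, (∑ j, α j) = r)
    (hclosed : ∀ α ∈ B, ∀ γ, stepUp n α γ → γ ∈ B)
    (β : Fin (n+1) →₀ ℕ) (hβ : β ∈ B)
    (hmin : ∀ γ ∈ B, borelGE n β γ → γ = β)
    (h0 : β 0 ≠ 0)
    (I : Ideal (MvPolynomial (Fin (n+1)) K))
    (hI : I = Ideal.span ((fun γ => monomial γ (1:K)) '' (B.erase β : Finset _))) :
    {γ : Fin (n+1) →₀ ℕ | (∑ j, γ j) = r + 1 ∧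
        monomial γ (1:K) ∈ Ideal.span ((fun γ => monomial γ (1:K)) '' (B : Finset _)) ∧
        monomial γ (1:K) ∉ I} = {β + Finsupp.single 0 1} ∧
    (Module.finrank K
        (Submodule.restrictScalars K
            ((Ideal.span ((fun γ => monomial γ (1:K)) '' (B : Finset _)) :
                Ideal (MvPolynomial (Fin (n+1)) K)) :
              Submodule (MvPolynomial (Fin (n+1)) K) (MvPolynomial (Fin (n+1)) K)) ⊓
          MvPolynomial.homogeneousSubmodule (Fin (n+1)) K (r+1) :
            Submodule K (MvPolynomial (Fin (n+1)) K)) : ℤ)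
      - (Module.finrank K
        (Submodule.restrictScalars K
            (I : Submodule (MvPolynomial (Fin (n+1)) K) (MvPolynomial (Fin (n+1)) K)) ⊓
          MvPolynomial.homogeneousSubmodule (Fin (n+1)) K (r+1) :
            Submodule K (MvPolynomial (Fin (n+1)) K)) : ℤ) = 1 := by
  classical
  have hclosed' : ∀ α ∈ B, ∀ γ, Relation.ReflTransGen (stepUp n) α γ → γ ∈ B := by
    intro α hα γ h
    induction h with
    | refl => exact hα
    | tail _ h2 ih => exact hclosed _ ih _ h2
  have hsum_add : ∀ (a b : Fin (n+1) →₀ ℕ), (∑ j, (a + b) j) = (∑ j, a j) + (∑ j, b j) := by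
    intro a b; simp [Finsupp.add_apply, Finset.sum_add_distrib]
  -- Fact 1: only β among B divides β + e₀
  have fact1 : ∀ α ∈ B, α ≤ β + Finsupp.single 0 1 → α = β := by
    intro α hα hle
    obtain ⟨c, hc⟩ := le_iff_exists_add.mp hle
    have hsc : (∑ j, c j) = 1 := by
      have h1 : (∑ j, ((β + Finsupp.single 0 1 : Fin (n+1) →₀ ℕ)) j) = (∑ j, (α + c) j) := by
        rw [← hc]
      rw [hsum_add, hsum_add, hdeg α hα, hdeg β hβ, S13.sum_single] at h1
      omega
    obtain ⟨j, rfl⟩ := S13.eq_single_of_sum_eq_one c hsc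
    rcases eq_or_ne j 0 with rfl | hj
    · exact (add_right_cancel hc.symm)
    · have hα0 : α 0 = β 0 + 1 := by
        have h2 := DFunLike.congr_fun hc (0 : Fin (n+1))
        simp [Finsupp.add_apply, Finsupp.single_apply, hj] at h2
        omega
      have h0j : (0 : Fin (n+1)) < j := Fin.pos_of_ne_zero hj
      have hα0' : α 0 ≠ 0 := by omega
      have hchain := S13.chain_move n j.val α 0 j (by simp) h0j hα0'
      have heqβ : α - Finsupp.single 0 1 + Finsupp.single j 1 = β := by
        have hle1 : Finsupp.single (0 : Fin (n+1)) 1 ≤ α :=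
          Finsupp.single_le_iff.mpr (by omega)
        rw [tsub_add_eq_add_tsub hle1, ← hc, add_tsub_cancel_right]
      rw [heqβ] at hchain
      exact hmin α hα hchain
  -- Fact 2
  have fact2 : ∀ γ : Fin (n+1) →₀ ℕ, (∑ j, γ j) = r + 1 →
      (∃ α ∈ B, α ≤ γ) → (∀ α ∈ B.erase β, ¬ α ≤ γ) →
      γ = β + Finsupp.single 0 1 := by
    rintro γ hγs ⟨α, hα, hαγ⟩ hno
    have hαβ : α = β := by
      by_contra hne
      exact hno α (Finset.mem_erase.mpr ⟨hne, hα⟩) hαγ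
    subst hαβ
    obtain ⟨c, hc⟩ := le_iff_exists_add.mp hαγ
    have hsc : (∑ j, c j) = 1 := by
      rw [hc, hsum_add, hdeg α hα] at hγs
      omega
    obtain ⟨j, rfl⟩ := S13.eq_single_of_sum_eq_one c hsc
    rcases eq_or_ne j 0 with rfl | hj
    · exact hc
    · exfalso
      have h0j : (0 : Fin (n+1)) < j := Fin.pos_of_ne_zero hj
      have hchain := S13.chain_move n j.val α 0 j (by simp) h0j h0
      have hmem : α - Finsupp.single 0 1 + Finsupp.single j 1 ∈ B :=
        hclosed' α hα _ hchain
      have hne : α - Finsupp.single 0 1 + Finsupp.single j 1 ≠ α := by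
        intro h
        have h2 := DFunLike.congr_fun h (0 : Fin (n+1))
        simp [Finsupp.add_apply, Finsupp.tsub_apply, Finsupp.single_apply, hj] at h2
        omega
      have hle' : α - Finsupp.single 0 1 + Finsupp.single j 1 ≤ γ := by
        rw [hc]
        exact add_le_add tsub_le_self le_rfl
      exact hno _ (Finset.mem_erase.mpr ⟨hne, hmem⟩) hle'
  -- the set equality
  have hset : {γ : Fin (n+1) →₀ ℕ | (∑ j, γ j) = r + 1 ∧
        monomial γ (1:K) ∈ Ideal.span ((fun γ => monomial γ (1:K)) '' (B : Finset _)) ∧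
        monomial γ (1:K) ∉ I} = {β + Finsupp.single 0 1} := by
    ext γ
    simp only [Set.mem_setOf_eq, Set.mem_singleton_iff]
    constructor
    · rintro ⟨hs, hJ, hnI⟩
      rw [S13.monomial_mem_iff] at hJ
      rw [hI, S13.monomial_mem_iff] at hnI
      push_neg at hnI
      obtain ⟨α, h1, h2⟩ := hJ
      refine fact2 γ hs ⟨α, h1, h2⟩ ?_
      intro a ha
      exact hnI a ha
    · rintro rfl
      refine ⟨?_, ?_, ?_⟩
      · rw [hsum_add, hdeg β hβ, S13.sum_single]
      · rw [S13.monomial_mem_iff]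
        exact ⟨β, hβ, self_le_add_right _ _⟩
      · rw [hI, S13.monomial_mem_iff]
        rintro ⟨α, hα, hle⟩
        have hαB : α ∈ B.erase β := hα
        exact (Finset.mem_erase.mp hαB).1
          (fact1 α (Finset.mem_of_mem_erase hαB) hle)
  refine ⟨hset, ?_⟩
  -- dimension count
  set v : MvPolynomial (Fin (n+1)) K := monomial (β + Finsupp.single 0 1) (1:K) with hv
  set J : Ideal (MvPolynomial (Fin (n+1)) K) :=
    Ideal.span ((fun γ => monomial γ (1:K)) '' (B : Finset _)) with hJdef
  set H : Submodule K (MvPolynomial (Fin (n+1)) K) :=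
    MvPolynomial.homogeneousSubmodule (Fin (n+1)) K (r+1) with hH
  set MI : Submodule K (MvPolynomial (Fin (n+1)) K) :=
    Submodule.restrictScalars K
      (I : Submodule (MvPolynomial (Fin (n+1)) K) (MvPolynomial (Fin (n+1)) K)) ⊓ H with hMI
  set MJ : Submodule K (MvPolynomial (Fin (n+1)) K) :=
    Submodule.restrictScalars K
      (J : Submodule (MvPolynomial (Fin (n+1)) K) (MvPolynomial (Fin (n+1)) K)) ⊓ H with hMJ
  have hv0 : v ≠ 0 := by
    rw [hv, Ne, MvPolynomial.monomial_eq_zero]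
    exact one_ne_zero
  have hsβ : (∑ j, ((β + Finsupp.single 0 1 : Fin (n+1) →₀ ℕ)) j) = r + 1 := by
    rw [hsum_add, hdeg β hβ, S13.sum_single]
  have hvH : v ∈ H := by
    rw [hH, mem_homogeneousSubmodule]
    apply isHomogeneous_monomial
    rw [← S13.sumUniv_eq_degree]
    exact hsβ
  have hvJ : v ∈ J := by
    rw [hJdef, hv, S13.monomial_mem_iff]
    exact ⟨β, hβ, self_le_add_right _ _⟩
  have hvI : v ∉ I := by
    rw [hI, hv, S13.monomial_mem_iff]
    rintro ⟨α, hα, hle⟩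
    have hαB : α ∈ B.erase β := hα
    exact (Finset.mem_erase.mp hαB).1 (fact1 α (Finset.mem_of_mem_erase hαB) hle)
  have hIJ : (I : Submodule (MvPolynomial (Fin (n+1)) K) (MvPolynomial (Fin (n+1)) K))
      ≤ (J : Submodule (MvPolynomial (Fin (n+1)) K) (MvPolynomial (Fin (n+1)) K)) := by
    rw [hI, hJdef]
    apply Ideal.span_mono
    apply Set.image_mono
    intro x hx
    exact Finset.mem_coe.mpr (Finset.mem_of_mem_erase (Finset.mem_coe.mp hx))
  have hsup : MJ = MI ⊔ Submodule.span K {v} := by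
    apply le_antisymm
    · intro p hp
      obtain ⟨hpJ, hpH⟩ := Submodule.mem_inf.mp hp
      have hpJ' : p ∈ J := hpJ
      set c : K := coeff (β + Finsupp.single 0 1) p with hcdef
      have hyI : p - monomial (β + Finsupp.single 0 1) c ∈ I := by
        rw [hI, mem_ideal_span_monomial_image]
        intro d hd
        have hd' : d ≠ β + Finsupp.single 0 1 ∧ d ∈ p.support := by
          have hcd := MvPolynomial.mem_support_iff.mp hd
          rcases eq_or_ne d (β + Finsupp.single 0 1) with rfl | hne
          · exfalso
            apply hcd
            simp [coeff_sub, coeff_monomial, hcdef]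
          · refine ⟨hne, MvPolynomial.mem_support_iff.mpr ?_⟩
            intro hz
            apply hcd
            rw [coeff_sub, hz, coeff_monomial, if_neg (Ne.symm hne), sub_zero]
        have hds : (∑ j, d j) = r + 1 := (S13.mem_homog_iff p).mp hpH d hd'.2
        have hdJ := mem_ideal_span_monomial_image.mp hpJ' d hd'.2
        by_contra hcon
        push_neg at hcon
        apply hd'.1
        refine fact2 d hds ?_ ?_
        · obtain ⟨a, h1, h2⟩ := hdJ
          exact ⟨a, h1, h2⟩
        · intro a ha
          exact hcon a ha
      have hyH : p - monomial (β + Finsupp.single 0 1) c ∈ H := by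
        apply Submodule.sub_mem _ hpH
        rw [hH, mem_homogeneousSubmodule]
        apply isHomogeneous_monomial
        rw [← S13.sumUniv_eq_degree]
        exact hsβ
      have hdecomp : p = (p - monomial (β + Finsupp.single 0 1) c) + c • v := by
        rw [hv, smul_monomial, smul_eq_mul, mul_one]
        ring
      rw [hdecomp]
      exact Submodule.add_mem_sup (Submodule.mem_inf.mpr ⟨hyI, hyH⟩)
        (Submodule.smul_mem _ c (Submodule.mem_span_singleton_self v))
    · apply sup_le
      · exact le_inf (le_trans inf_le_left (fun x hx => hIJ hx)) inf_le_right
      · rw [Submodule.span_le, Set.singleton_subset_iff]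
        exact Submodule.mem_inf.mpr ⟨hvJ, hvH⟩
  haveI hHfd : FiniteDimensional K H := S13.homog_fd K (n+1) (r+1)
  haveI : FiniteDimensional K MI := Submodule.finiteDimensional_of_le inf_le_right
  haveI : FiniteDimensional K (Submodule.span K ({v} : Set (MvPolynomial (Fin (n+1)) K))) :=
    FiniteDimensional.span_of_finite K (Set.finite_singleton v)
  have hbot : MI ⊓ Submodule.span K {v} = ⊥ := by
    rw [eq_bot_iff]
    intro x hx
    obtain ⟨hx1, hx2⟩ := Submodule.mem_inf.mp hx
    obtain ⟨a, rfl⟩ := Submodule.mem_span_singleton.mp hx2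
    rcases eq_or_ne a 0 with rfl | ha
    · simp
    · exfalso
      apply hvI
      have h1 : a • v ∈ Submodule.restrictScalars K
          (I : Submodule (MvPolynomial (Fin (n+1)) K) (MvPolynomial (Fin (n+1)) K)) :=
        (Submodule.mem_inf.mp hx1).1
      have h2 := Submodule.smul_mem (Submodule.restrictScalars K
          (I : Submodule (MvPolynomial (Fin (n+1)) K) (MvPolynomial (Fin (n+1)) K))) a⁻¹ h1
      rw [smul_smul, inv_mul_cancel₀ ha, one_smul] at h2
      exact h2
  have hrank := Submodule.finrank_sup_add_finrank_inf_eq MI (Submodule.span K {v})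
  rw [hbot, finrank_bot, finrank_span_singleton hv0] at hrank
  rw [hsup]
  push_cast
  omega
end
end
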